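/- Assume the complex-valued linear system Σ is stabilizable and {P₁,P₂} is the unique positive definite bimatrix solution of the bimatrix Riccati equation. Then the iteration starting from {P₁(0),P₂(0)} = {Q,0} is well defined (for every k the bimatrix {S₁(k),S₂(k)} = {R,0} + {B₁,B₂}^H{P₁(k),P₂(k)}{B₁,B₂} is positive definite, hence invertible), and for every k ≥ 0: {Q,0} ≤ {P₁(k),P₂(k)} ≤ {P₁(k+1),P₂(k+1)} ≤ {P₁,P₂}. -/

import Mathlib

open Matrix Filter Topology
open scoped ENNReal ComplexOrder

noncomputable section

/-- Entrywise complex conjugate of a matrix, `M^#`. -/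
def mconj {k l : Type*} (A : Matrix k l ℂ) : Matrix k l ℂ := A.map (starRingEnd ℂ)

/-- A bimatrix `{A₁, A₂}` of `k × l` complex matrices. -/
structure Bimatrix (k l : ℕ) where
  fst : Matrix (Fin k) (Fin l) ℂ
  snd : Matrix (Fin k) (Fin l) ℂ

namespace Bimatrix

variable {k l p : ℕ}

/-- The action of a bimatrix on a vector: `{A₁,A₂}x = A₁x + A₂^# x^#`. -/
def apply (A : Bimatrix k l) (x : Fin l → ℂ) : Fin k → ℂ :=
  A.fst *ᵥ x + mconj A.snd *ᵥ star x

/-- Bimatrix product `{A₁,A₂}{B₁,B₂} = {A₁B₁ + A₂^#B₂, A₁^#B₂ + A₂B₁}`. -/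
def mul (A : Bimatrix k l) (B : Bimatrix l p) : Bimatrix k p :=
  ⟨A.fst * B.fst + mconj A.snd * B.snd, mconj A.fst * B.snd + A.snd * B.fst⟩

/-- Bimatrix conjugate transpose `{A₁,A₂}^H = {A₁^H, A₂^T}`. -/
def conjT (A : Bimatrix k l) : Bimatrix l k :=
  ⟨A.fst.conjTranspose, A.snd.transpose⟩

def add (A B : Bimatrix k l) : Bimatrix k l := ⟨A.fst + B.fst, A.snd + B.snd⟩

def sub (A B : Bimatrix k l) : Bimatrix k l := ⟨A.fst - B.fst, A.snd - B.snd⟩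

def neg (A : Bimatrix k l) : Bimatrix k l := ⟨-A.fst, -A.snd⟩

/-- The identity bimatrix `{I, 0}`. -/
def one (k : ℕ) : Bimatrix k k := ⟨1, 0⟩

/-- A bimatrix is Hermitian if `P₁^H = P₁` and `P₂^T = P₂`. -/
def IsHermitian (P : Bimatrix k k) : Prop :=
  P.fst.conjTranspose = P.fst ∧ P.snd.transpose = P.snd

/-- The real quadratic form `Re (x^H P₁ x + x^H P₂^# x^#)` of a bimatrix. -/
def quadForm (P : Bimatrix k k) (x : Fin k → ℂ) : ℝ :=
  (star x ⬝ᵥ P.apply x).re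

/-- Positive semidefinite bimatrix. -/
def PosSemidef (P : Bimatrix k k) : Prop :=
  P.IsHermitian ∧ ∀ x : Fin k → ℂ, 0 ≤ P.quadForm x

/-- Positive definite bimatrix. -/
def PosDef (P : Bimatrix k k) : Prop :=
  P.IsHermitian ∧ (∀ x : Fin k → ℂ, 0 ≤ P.quadForm x) ∧
    ∀ x : Fin k → ℂ, x ≠ 0 → 0 < P.quadForm x

/-- The Loewner-type order on bimatrices: `X ≤ Y` iff `Y - X ≥ 0`. -/
def le (X Y : Bimatrix k k) : Prop := PosSemidef (Y.sub X)

/-- `T` is the (two-sided) inverse of the bimatrix `S`. -/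
def IsInv (S T : Bimatrix k k) : Prop := S.mul T = one k ∧ T.mul S = one k

/-- The complex-matrix representation of a bimatrix. -/
def toMat (S : Bimatrix k k) : Matrix (Fin k ⊕ Fin k) (Fin k ⊕ Fin k) ℂ :=
  fromBlocks S.fst (mconj S.snd) S.snd (mconj S.fst)

/-- The inverse of a bimatrix, extracted from the inverse of its complex-matrix
representation.  When `S` is invertible as a bimatrix, `S.inv` is its genuine inverse. -/
def inv (S : Bimatrix k k) : Bimatrix k k :=
  ⟨(toMat S)⁻¹.toBlocks₁₁, (toMat S)⁻¹.toBlocks₂₁⟩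

end Bimatrix

variable {n m : ℕ}

/-- The complex-valued linear system `x(k+1) = {A₁,A₂}x(k) + {B₁,B₂}u(k)` is
stabilizable if some full state feedback `u(k) = K₁x(k) + K₂^#x^#(k)` drives every
closed-loop solution to zero. -/
def Stabilizable (A : Bimatrix n n) (B : Bimatrix n m) : Prop :=
  ∃ K : Bimatrix m n, ∀ x : ℕ → (Fin n → ℂ),
    (∀ k : ℕ, x (k + 1) = A.apply (x k) + B.apply (K.apply (x k))) →
    Tendsto x atTop (𝓝 0)

/-- `{S₁,S₂} = {R,0} + {B₁,B₂}^H {P₁,P₂} {B₁,B₂}`. -/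
def Smat (B : Bimatrix n m) (R : Matrix (Fin m) (Fin m) ℂ) (P : Bimatrix n n) :
    Bimatrix m m :=
  (Bimatrix.mk R 0).add (B.conjT.mul (P.mul B))

/-- The bimatrix Riccati equation
`-{Q,0} = {A}^H{P}{A} - {P} - {A}^H{P}{B}{S}⁻¹{B}^H{P}{A}`, where
`{S} = {R,0} + {B}^H{P}{B}` is required to be invertible. -/
def RiccatiEq (A : Bimatrix n n) (B : Bimatrix n m)
    (Q : Matrix (Fin n) (Fin n) ℂ) (R : Matrix (Fin m) (Fin m) ℂ)
    (P : Bimatrix n n) : Prop :=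
  ∃ T : Bimatrix m m, (Smat B R P).IsInv T ∧
    (Bimatrix.mk Q 0).neg =
      ((A.conjT.mul (P.mul A)).sub P).sub
        (A.conjT.mul (P.mul (B.mul (T.mul (B.conjT.mul (P.mul A))))))

/-- The Riccati iteration `{P(0)} = {Q,0}`,
`{P(k+1)} = {Q,0} + {A}^H{P(k)}{A} - {A}^H{P(k)}{B}{S(k)}⁻¹{B}^H{P(k)}{A}`, where
`{S(k)} = {R,0} + {B}^H{P(k)}{B}`. -/
def riccatiIter (A : Bimatrix n n) (B : Bimatrix n m)
    (Q : Matrix (Fin n) (Fin n) ℂ) (R : Matrix (Fin m) (Fin m) ℂ) : ℕ → Bimatrix n n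
  | 0 => ⟨Q, 0⟩
  | k + 1 =>
    let P := riccatiIter A B Q R k
    ((Bimatrix.mk Q 0).add (A.conjT.mul (P.mul A))).sub
      (A.conjT.mul (P.mul (B.mul ((Smat B R P).inv.mul (B.conjT.mul (P.mul A))))))
section MatrixRiccati
set_option linter.unusedSectionVars false
variable {N M : Type*} [Fintype N] [Fintype M] [DecidableEq N] [DecidableEq M]

/-- The Riccati map. -/
def fm (A : Matrix N N ℂ) (B : Matrix N M ℂ) (Qm : Matrix N N ℂ) (Rm : Matrix M M ℂ)
    (X : Matrix N N ℂ) : Matrix N N ℂ :=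
  Qm + Aᴴ * X * A - Aᴴ * X * B * (Rm + Bᴴ * X * B)⁻¹ * (Bᴴ * X * A)

lemma S_posdef {Rm : Matrix M M ℂ} {X : Matrix N N ℂ} (hRm : Rm.PosDef)
    (hX : X.PosSemidef) (B : Matrix N M ℂ) : (Rm + Bᴴ * X * B).PosDef :=
  hRm.add_posSemidef (hX.conjTranspose_mul_mul_same B)

lemma posSemidef_fromBlocks_diag {A : Matrix N N ℂ} {D : Matrix M M ℂ}
    (hA : A.PosSemidef) (hD : D.PosSemidef) :
    (fromBlocks A 0 0 D).PosSemidef := by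
  refine Matrix.PosSemidef.of_dotProduct_mulVec_nonneg ?_ ?_
  · show _ = _
    rw [fromBlocks_conjTranspose]
    simp [hA.1.eq, hD.1.eq]
  · intro x
    rw [fromBlocks_mulVec]
    simp only [zero_mulVec, add_zero, zero_add]
    have hx : star x = Sum.elim (star (x ∘ Sum.inl)) (star (x ∘ Sum.inr)) := by
      funext i; cases i <;> rfl
    rw [hx, dotProduct_block]
    simp only [Sum.elim_comp_inl, Sum.elim_comp_inr]
    exact add_nonneg (hA.dotProduct_mulVec_nonneg _) (hD.dotProduct_mulVec_nonneg _)

lemma posDef_fromBlocks_diag {A : Matrix N N ℂ} {D : Matrix M M ℂ}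
    (hA : A.PosDef) (hD : D.PosDef) :
    (fromBlocks A 0 0 D).PosDef := by
  refine Matrix.PosDef.of_dotProduct_mulVec_pos (posSemidef_fromBlocks_diag hA.posSemidef hD.posSemidef).1 (fun x hx => ?_)
  rw [fromBlocks_mulVec]
  simp only [zero_mulVec, add_zero, zero_add]
  have hxs : star x = Sum.elim (star (x ∘ Sum.inl)) (star (x ∘ Sum.inr)) := by
    funext i; cases i <;> rfl
  rw [hxs, dotProduct_block]
  simp only [Sum.elim_comp_inl, Sum.elim_comp_inr]
  have : x ∘ Sum.inl ≠ 0 ∨ x ∘ Sum.inr ≠ 0 := by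
    by_contra h
    push_neg at h
    apply hx
    funext i
    cases i with
    | inl i => exact congrFun h.1 i
    | inr i => exact congrFun h.2 i
  rcases this with h | h
  · exact add_pos_of_pos_of_nonneg (hA.dotProduct_mulVec_pos h) (hD.posSemidef.dotProduct_mulVec_nonneg _)
  · exact add_pos_of_nonneg_of_pos (hA.posSemidef.dotProduct_mulVec_nonneg _) (hD.dotProduct_mulVec_pos h)

lemma schur_core {Rm : Matrix M M ℂ} {X : Matrix N N ℂ} (hRm : Rm.PosDef)
    (hX : X.PosSemidef) (B : Matrix N M ℂ) :
    (X - X * B * (Rm + Bᴴ * X * B)⁻¹ * (Bᴴ * X)).PosSemidef := by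
  have hS : (Rm + Bᴴ * X * B).PosDef := S_posdef hRm hX B
  haveI := hS.isUnit.invertible
  set C := (open scoped MatrixOrder in CFC.sqrt X) with hC
  have hCH : Cᴴ = C := (open scoped MatrixOrder in (CFC.sqrt_nonneg X).posSemidef.1)
  have hCC : C * C = X := (open scoped MatrixOrder in CFC.sqrt_mul_sqrt_self X hX.nonneg)
  have key : fromBlocks X (X * B) (X * B)ᴴ (Rm + Bᴴ * X * B)
      = (fromBlocks C (C * B) 0 0)ᴴ * (fromBlocks C (C * B) 0 0)
        + fromBlocks 0 0 0 Rm := by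
    rw [fromBlocks_conjTranspose, fromBlocks_multiply, fromBlocks_add]
    refine Matrix.fromBlocks_inj.mpr ⟨?_, ?_, ?_, ?_⟩
    · simp [hCH, hCC]
    · simp [hCH, ← Matrix.mul_assoc, hCC]
    · simp [conjTranspose_mul, hCH, hX.1.eq, Matrix.mul_assoc, hCC]
    · simp [conjTranspose_mul, hCH, ← Matrix.mul_assoc]
      rw [Matrix.mul_assoc Bᴴ C C, hCC, add_comm]
  have hblk : (fromBlocks X (X * B) (X * B)ᴴ (Rm + Bᴴ * X * B)).PosSemidef := by
    rw [key]
    exact (posSemidef_conjTranspose_mul_self _).add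
      (posSemidef_fromBlocks_diag Matrix.PosSemidef.zero hRm.posSemidef)
  have := (Matrix.PosDef.fromBlocks₂₂ _ _ hS).mp hblk
  have hXBH : (X * B)ᴴ = Bᴴ * X := by rw [conjTranspose_mul, hX.1.eq]
  rw [hXBH] at this
  convert this using 2

lemma riccati_key (A : Matrix N N ℂ) (B : Matrix N M ℂ) (Qm : Matrix N N ℂ)
    {Rm : Matrix M M ℂ} {X : Matrix N N ℂ}
    (hX : X.IsHermitian) (hRm : Rm.IsHermitian) (hS : IsUnit (Rm + Bᴴ * X * B))
    (K : Matrix M N ℂ) :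
    Qm + (A + B * K)ᴴ * X * (A + B * K) + Kᴴ * Rm * K
      = fm A B Qm Rm X
        + (K + (Rm + Bᴴ * X * B)⁻¹ * (Bᴴ * X * A))ᴴ * (Rm + Bᴴ * X * B)
          * (K + (Rm + Bᴴ * X * B)⁻¹ * (Bᴴ * X * A)) := by
  simp only [fm]
  set S := Rm + Bᴴ * X * B with hSdef
  have hdet : IsUnit S.det := (Matrix.isUnit_iff_isUnit_det S).mp hS
  have hSH : Sᴴ = S := by
    rw [hSdef]
    simp [conjTranspose_add, conjTranspose_mul, hX.eq, hRm.eq, Matrix.mul_assoc]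
  have hSiH : (S⁻¹)ᴴ = S⁻¹ := by rw [Matrix.conjTranspose_nonsing_inv, hSH]
  have c1 : ∀ t : Matrix M N ℂ, S * (S⁻¹ * t) = t := fun t => by
    rw [← Matrix.mul_assoc, Matrix.mul_nonsing_inv _ hdet, Matrix.one_mul]
  have c2 : ∀ t : Matrix M N ℂ, S⁻¹ * (S * t) = t := fun t => by
    rw [← Matrix.mul_assoc, Matrix.nonsing_inv_mul _ hdet, Matrix.one_mul]
  have hRmS : Rm = S - Bᴴ * X * B := by rw [hSdef]; abel
  rw [show Kᴴ * Rm * K = Kᴴ * (S - Bᴴ * X * B) * K by rw [← hRmS]]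
  simp only [conjTranspose_add, conjTranspose_mul, conjTranspose_conjTranspose,
    hX.eq, hSiH, Matrix.add_mul, Matrix.mul_add, Matrix.sub_mul, Matrix.mul_sub,
    Matrix.mul_assoc, c1, c2]
  abel

lemma fm_eq_min (A : Matrix N N ℂ) (B : Matrix N M ℂ) (Qm : Matrix N N ℂ)
    {Rm : Matrix M M ℂ} {X : Matrix N N ℂ}
    (hX : X.IsHermitian) (hRm : Rm.IsHermitian) (hS : IsUnit (Rm + Bᴴ * X * B)) :
    fm A B Qm Rm X
      = Qm + (A + B * (-((Rm + Bᴴ * X * B)⁻¹ * (Bᴴ * X * A))))ᴴ * X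
          * (A + B * (-((Rm + Bᴴ * X * B)⁻¹ * (Bᴴ * X * A))))
        + (-((Rm + Bᴴ * X * B)⁻¹ * (Bᴴ * X * A)))ᴴ * Rm
          * (-((Rm + Bᴴ * X * B)⁻¹ * (Bᴴ * X * A))) := by
  have h := riccati_key A B Qm hX hRm hS (-((Rm + Bᴴ * X * B)⁻¹ * (Bᴴ * X * A)))
  rw [neg_add_cancel] at h
  simpa using h.symm

lemma fm_mono (A : Matrix N N ℂ) (B : Matrix N M ℂ) (Qm : Matrix N N ℂ)
    {Rm : Matrix M M ℂ} {X Y : Matrix N N ℂ} (hRm : Rm.PosDef)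
    (hX : X.PosSemidef) (hY : Y.PosSemidef) (hXY : (Y - X).PosSemidef) :
    (fm A B Qm Rm Y - fm A B Qm Rm X).PosSemidef := by
  have hSX : (Rm + Bᴴ * X * B).PosDef := S_posdef hRm hX B
  have hSY : (Rm + Bᴴ * Y * B).PosDef := S_posdef hRm hY B
  set JY := (Rm + Bᴴ * Y * B)⁻¹ * (Bᴴ * Y * A) with hJY
  set JX := (Rm + Bᴴ * X * B)⁻¹ * (Bᴴ * X * A) with hJX
  have e1 := riccati_key A B Qm hX.1 hRm.1 hSX.isUnit (-JY)
  have e2 := fm_eq_min A B Qm hY.1 hRm.1 hSY.isUnit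
  rw [← hJY] at e2
  rw [← hJX] at e1
  have hfx : fm A B Qm Rm X
      = Qm + (A + B * (-JY))ᴴ * X * (A + B * (-JY)) + (-JY)ᴴ * Rm * (-JY)
        - (-JY + JX)ᴴ * (Rm + Bᴴ * X * B) * (-JY + JX) := by
    rw [e1]; abel
  have key : fm A B Qm Rm Y - fm A B Qm Rm X
      = (A + B * (-JY))ᴴ * (Y - X) * (A + B * (-JY))
        + (-JY + JX)ᴴ * (Rm + Bᴴ * X * B) * (-JY + JX) := by
    rw [e2, hfx, Matrix.mul_sub, Matrix.sub_mul]
    abel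
  rw [key]
  exact (hXY.conjTranspose_mul_mul_same _).add
    (hSX.posSemidef.conjTranspose_mul_mul_same _)

lemma fm_ge (A : Matrix N N ℂ) (B : Matrix N M ℂ) (Qm : Matrix N N ℂ)
    {Rm : Matrix M M ℂ} {X : Matrix N N ℂ} (hRm : Rm.PosDef) (hX : X.PosSemidef) :
    (fm A B Qm Rm X - Qm).PosSemidef := by
  have hschur := schur_core hRm hX B
  have h : fm A B Qm Rm X - Qm
      = Aᴴ * (X - X * B * (Rm + Bᴴ * X * B)⁻¹ * (Bᴴ * X)) * A := by
    simp only [fm, Matrix.mul_sub, Matrix.sub_mul, Matrix.mul_assoc]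
    abel
  rw [h]
  exact hschur.conjTranspose_mul_mul_same A

end MatrixRiccati

section Aux
set_option linter.unusedSectionVars false

/-! ### `mconj` lemmas -/

lemma mconj_mconj {a b : Type*} (A : Matrix a b ℂ) : mconj (mconj A) = A := by
  ext i j; simp [mconj]

lemma mconj_mul {a b c : Type*} [Fintype b] (A : Matrix a b ℂ) (B : Matrix b c ℂ) :
    mconj (A * B) = mconj A * mconj B :=
  Matrix.map_mul

lemma mconj_add {a b : Type*} (A B : Matrix a b ℂ) :
    mconj (A + B) = mconj A + mconj B := by
  ext i j; simp [mconj]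

lemma mconj_zero {a b : Type*} : mconj (0 : Matrix a b ℂ) = 0 := by
  ext i j; simp [mconj]

lemma mconj_one {a : Type*} [DecidableEq a] : mconj (1 : Matrix a a ℂ) = 1 := by
  ext i j
  by_cases h : i = j <;> simp [mconj, Matrix.one_apply, h]

lemma conjTranspose_mconj {a b : Type*} (A : Matrix a b ℂ) : (mconj A)ᴴ = Aᵀ := by
  ext i j; simp [mconj]

lemma conjTranspose_eq_mconj {a b : Type*} (A : Matrix a b ℂ) : Aᴴ = mconj Aᵀ := by
  ext i j; simp [mconj]

lemma mconj_of_isHermitian {a : Type*} {Q : Matrix a a ℂ} (h : Q.IsHermitian) :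
    mconj Q = Qᵀ := by
  ext i j
  simpa [mconj, Matrix.conjTranspose_apply] using congrFun (congrFun h.eq j) i

/-! ### the block-matrix representation `bm` of a bimatrix -/

/-- Rectangular version of `Bimatrix.toMat`. -/
def bm {a b : ℕ} (A : Bimatrix a b) : Matrix (Fin a ⊕ Fin a) (Fin b ⊕ Fin b) ℂ :=
  Matrix.fromBlocks A.fst (mconj A.snd) A.snd (mconj A.fst)

lemma toMat_eq_bm {a : ℕ} (S : Bimatrix a a) : S.toMat = bm S := rfl

lemma bm_mul {a b c : ℕ} (A : Bimatrix a b) (B : Bimatrix b c) :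
    bm (A.mul B) = bm A * bm B := by
  simp only [bm, Bimatrix.mul, Matrix.fromBlocks_multiply, mconj_add, mconj_mul, mconj_mconj]
  exact Matrix.fromBlocks_inj.mpr ⟨rfl, rfl, add_comm _ _, add_comm _ _⟩

lemma bm_add {a b : ℕ} (A B : Bimatrix a b) : bm (A.add B) = bm A + bm B := by
  simp only [bm, Bimatrix.add, mconj_add, Matrix.fromBlocks_add]

lemma bm_sub {a b : ℕ} (A B : Bimatrix a b) : bm (A.sub B) = bm A - bm B := by
  have h : A.sub B = Bimatrix.mk (A.fst - B.fst) (A.snd - B.snd) := rfl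
  ext (i | i) (j | j) <;>
    simp [bm, h, mconj, Matrix.fromBlocks, Matrix.sub_apply]

lemma bm_neg {a b : ℕ} (A : Bimatrix a b) : bm (A.neg) = -(bm A) := by
  ext (i | i) (j | j) <;> simp [bm, Bimatrix.neg, mconj, Matrix.fromBlocks]

lemma bm_one {a : ℕ} : bm (Bimatrix.one a) = 1 := by
  simp only [bm, Bimatrix.one, mconj_one, mconj_zero, Matrix.fromBlocks_one]

lemma bm_conjT {a b : ℕ} (A : Bimatrix a b) : bm (A.conjT) = (bm A)ᴴ := by
  ext (i | i) (j | j) <;> simp [bm, Bimatrix.conjT, mconj, Matrix.fromBlocks]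

lemma bm_injective {a b : ℕ} {A B : Bimatrix a b} (h : bm A = bm B) : A = B := by
  have h11 := congrArg Matrix.toBlocks₁₁ h
  have h21 := congrArg Matrix.toBlocks₂₁ h
  simp only [bm, Matrix.toBlocks_fromBlocks₁₁, Matrix.toBlocks_fromBlocks₂₁] at h11 h21
  cases A; cases B
  simp_all

end Aux

section Aux2
set_option linter.unusedSectionVars false

/-- conjugate-swap involution on block matrices -/
def csw {a b : ℕ} (M : Matrix (Fin a ⊕ Fin a) (Fin b ⊕ Fin b) ℂ) :
    Matrix (Fin a ⊕ Fin a) (Fin b ⊕ Fin b) ℂ :=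
  (M.map (starRingEnd ℂ)).submatrix (Equiv.sumComm (Fin a) (Fin a))
    (Equiv.sumComm (Fin b) (Fin b))

lemma csw_mul {a b c : ℕ} (M : Matrix (Fin a ⊕ Fin a) (Fin b ⊕ Fin b) ℂ)
    (N : Matrix (Fin b ⊕ Fin b) (Fin c ⊕ Fin c) ℂ) :
    csw (M * N) = csw M * csw N := by
  simp only [csw, Matrix.map_mul]
  rw [Matrix.submatrix_mul_equiv (M.map (starRingEnd ℂ)) (N.map (starRingEnd ℂ)) _
    (Equiv.sumComm (Fin b) (Fin b)) _]

lemma csw_apply {a b : ℕ} (M : Matrix (Fin a ⊕ Fin a) (Fin b ⊕ Fin b) ℂ) (i j) :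
    csw M i j = star (M (Sum.swap i) (Sum.swap j)) := rfl

lemma csw_bm {a b : ℕ} (A : Bimatrix a b) : csw (bm A) = bm A := by
  ext (i | i) (j | j) <;>
    simp [csw_apply, bm, mconj, Matrix.fromBlocks, Sum.swap]

lemma csw_one {a : ℕ} : csw (1 : Matrix (Fin a ⊕ Fin a) (Fin a ⊕ Fin a) ℂ) = 1 := by
  have h := csw_bm (Bimatrix.one a)
  rwa [bm_one] at h

lemma eq_bm_of_csw {a b : ℕ} (M : Matrix (Fin a ⊕ Fin a) (Fin b ⊕ Fin b) ℂ)
    (h : csw M = M) : bm ⟨M.toBlocks₁₁, M.toBlocks₂₁⟩ = M := by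
  have h' : ∀ i j, star (M (Sum.swap i) (Sum.swap j)) = M i j := by
    intro i j
    rw [← csw_apply, h]
  ext (i | i) (j | j)
  · rfl
  · exact h' (Sum.inl i) (Sum.inr j)
  · rfl
  · exact h' (Sum.inr i) (Sum.inr j)

lemma bm_inv_eq {a : ℕ} (S : Bimatrix a a) (hU : IsUnit (bm S)) :
    bm S.inv = (bm S)⁻¹ := by
  have hdet : IsUnit (bm S).det := (Matrix.isUnit_iff_isUnit_det _).mp hU
  have h1 : bm S * (bm S)⁻¹ = 1 := Matrix.mul_nonsing_inv _ hdet
  have h2 : csw ((bm S)⁻¹) = (bm S)⁻¹ := by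
    have h3 := congrArg csw h1
    rw [csw_mul, csw_one, csw_bm] at h3
    exact (Matrix.inv_eq_right_inv h3).symm
  show bm ⟨(S.toMat)⁻¹.toBlocks₁₁, (S.toMat)⁻¹.toBlocks₂₁⟩ = (bm S)⁻¹
  rw [toMat_eq_bm]
  exact eq_bm_of_csw _ h2

lemma isInv_of_isUnit {a : ℕ} (S : Bimatrix a a) (hU : IsUnit (bm S)) :
    S.IsInv S.inv := by
  have hdet : IsUnit (bm S).det := (Matrix.isUnit_iff_isUnit_det _).mp hU
  constructor
  · apply bm_injective
    rw [bm_mul, bm_inv_eq S hU, bm_one]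
    exact Matrix.mul_nonsing_inv _ hdet
  · apply bm_injective
    rw [bm_mul, bm_inv_eq S hU, bm_one]
    exact Matrix.nonsing_inv_mul _ hdet

lemma bm_of_isInv {a : ℕ} {S T : Bimatrix a a} (h : S.IsInv T) :
    IsUnit (bm S) ∧ bm T = (bm S)⁻¹ := by
  have h1 : bm S * bm T = 1 := by rw [← bm_mul, h.1, bm_one]
  have h2 : bm T * bm S = 1 := by rw [← bm_mul, h.2, bm_one]
  exact ⟨⟨⟨bm S, bm T, h1, h2⟩, rfl⟩, (Matrix.inv_eq_right_inv h1).symm⟩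

end Aux2

section Aux3
set_option linter.unusedSectionVars false

lemma star_sum_elim {a b : ℕ} (x : Fin a → ℂ) (y : Fin b → ℂ) :
    star (Sum.elim x y) = Sum.elim (star x) (star y) := by
  funext i; cases i <;> rfl

lemma star_mulVec' {a b : ℕ} (M : Matrix (Fin a) (Fin b) ℂ) (v : Fin b → ℂ) :
    star (M *ᵥ v) = mconj M *ᵥ star v := by
  funext i
  simp only [Pi.star_apply, Matrix.mulVec, dotProduct, mconj, Matrix.map_apply]
  rw [star_sum]
  congr 1; funext j
  simp [mul_comm]

lemma star_dot' {a : ℕ} (u v : Fin a → ℂ) :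
    star (star u ⬝ᵥ v) = u ⬝ᵥ star v := by
  simp only [dotProduct]
  rw [star_sum]
  congr 1; funext j
  simp [mul_comm]

lemma bm_mulVec_pair {a : ℕ} (P : Bimatrix a a) (x : Fin a → ℂ) :
    bm P *ᵥ Sum.elim x (star x) = Sum.elim (P.apply x) (star (P.apply x)) := by
  rw [bm, Matrix.fromBlocks_mulVec]
  simp only [Sum.elim_comp_inl, Sum.elim_comp_inr]
  have h2 : P.snd *ᵥ x + mconj P.fst *ᵥ star x
      = star (P.fst *ᵥ x + mconj P.snd *ᵥ star x) := by
    rw [star_add, star_mulVec', star_mulVec', mconj_mconj, star_star, add_comm]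
  rw [show P.apply x = P.fst *ᵥ x + mconj P.snd *ᵥ star x from rfl, ← h2]

lemma quad_pair {a : ℕ} (P : Bimatrix a a) (x : Fin a → ℂ) :
    star (Sum.elim x (star x)) ⬝ᵥ (bm P *ᵥ Sum.elim x (star x))
      = ((2 * P.quadForm x : ℝ) : ℂ) := by
  rw [bm_mulVec_pair, star_sum_elim, Matrix.dotProduct_block]
  simp only [Sum.elim_comp_inl, Sum.elim_comp_inr]
  have h2 : star (star x) ⬝ᵥ star (P.apply x) = star (star x ⬝ᵥ P.apply x) := by
    rw [star_dot', star_star]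
  rw [h2]
  rw [show star (star x ⬝ᵥ P.apply x) = (starRingEnd ℂ) (star x ⬝ᵥ P.apply x) from rfl,
    Complex.add_conj]
  push_cast
  rfl

lemma isHermitian_iff_bm {a : ℕ} (P : Bimatrix a a) :
    P.IsHermitian ↔ (bm P).IsHermitian := by
  constructor
  · intro h
    have h2 : P.conjT = P := by
      cases P with
      | mk f s =>
        show Bimatrix.mk fᴴ sᵀ = Bimatrix.mk f s
        rw [h.1, h.2]
    show (bm P)ᴴ = bm P
    rw [← bm_conjT, h2]
  · intro h
    have h2 : P.conjT = P := bm_injective (by rw [bm_conjT]; exact h.eq)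
    cases P with
    | mk f s =>
      have h3 := congrArg Bimatrix.fst h2
      have h4 := congrArg Bimatrix.snd h2
      exact ⟨h3, h4⟩

lemma quadForm_nonneg_of_bm {a : ℕ} {P : Bimatrix a a}
    (h : ∀ z, 0 ≤ star z ⬝ᵥ (bm P *ᵥ z)) (x : Fin a → ℂ) : 0 ≤ P.quadForm x := by
  have := h (Sum.elim x (star x))
  rw [quad_pair] at this
  rw [Complex.zero_le_real] at this
  linarith

lemma quadForm_pos_of_bm {a : ℕ} {P : Bimatrix a a}
    (h : ∀ z, z ≠ 0 → 0 < star z ⬝ᵥ (bm P *ᵥ z)) {x : Fin a → ℂ} (hx : x ≠ 0) :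
    0 < P.quadForm x := by
  have hz : Sum.elim x (star x) ≠ 0 := by
    intro h0
    exact hx (funext fun i => congrFun h0 (Sum.inl i))
  have := h _ hz
  rw [quad_pair] at this
  rw [Complex.zero_lt_real] at this
  linarith

end Aux3

section Aux4
set_option linter.unusedSectionVars false

lemma herm_dot {I : Type*} [Fintype I] {Mt : Matrix I I ℂ} (h : Mt.IsHermitian)
    (u v : I → ℂ) :
    star (star u ⬝ᵥ (Mt *ᵥ v)) = star v ⬝ᵥ (Mt *ᵥ u) := by
  rw [← Matrix.star_dotProduct, Matrix.star_mulVec, ← Matrix.dotProduct_mulVec, h.eq]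

lemma star_dot_gen {I : Type*} [Fintype I] (u v : I → ℂ) :
    star (star u ⬝ᵥ v) = u ⬝ᵥ star v := by
  simp only [dotProduct]
  rw [star_sum]
  congr 1; funext j
  simp [mul_comm]

lemma z_decomp {a : ℕ} (z : Fin a ⊕ Fin a → ℂ) :
    z = Sum.elim (fun i => 2⁻¹ * (z (Sum.inl i) + (starRingEnd ℂ) (z (Sum.inr i))))
          (star fun i => 2⁻¹ * (z (Sum.inl i) + (starRingEnd ℂ) (z (Sum.inr i))))
        + Complex.I •
          Sum.elim (fun i => (-Complex.I / 2) * (z (Sum.inl i) - (starRingEnd ℂ) (z (Sum.inr i))))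
            (star fun i => (-Complex.I / 2) * (z (Sum.inl i) - (starRingEnd ℂ) (z (Sum.inr i)))) := by
  funext i
  cases i with
  | inl i =>
    simp only [Pi.add_apply, Pi.smul_apply, Sum.elim_inl, smul_eq_mul]
    linear_combination ((z (Sum.inl i) - (starRingEnd ℂ) (z (Sum.inr i))) / 2) * Complex.I_sq
  | inr i =>
    simp only [Pi.add_apply, Pi.smul_apply, Sum.elim_inr, smul_eq_mul, Pi.star_apply]
    simp only [Complex.star_def, map_add, map_sub, _root_.map_mul, map_inv₀, map_neg,
      map_ofNat, Complex.conj_I, Complex.conj_conj, map_div₀]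
    linear_combination (z (Sum.inr i) - (starRingEnd ℂ) (z (Sum.inl i))) / 2 * Complex.I_sq

lemma bm_quad_eq {a : ℕ} (P : Bimatrix a a) (hH : (bm P).IsHermitian)
    (z : Fin a ⊕ Fin a → ℂ) :
    star z ⬝ᵥ (bm P *ᵥ z)
      = ((2 * P.quadForm (fun i => 2⁻¹ * (z (Sum.inl i) + (starRingEnd ℂ) (z (Sum.inr i))))
          + 2 * P.quadForm
              (fun i => (-Complex.I / 2) * (z (Sum.inl i) - (starRingEnd ℂ) (z (Sum.inr i)))) : ℝ)
          : ℂ) := by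
  set x : Fin a → ℂ := fun i => 2⁻¹ * (z (Sum.inl i) + (starRingEnd ℂ) (z (Sum.inr i))) with hx
  set w : Fin a → ℂ :=
    fun i => (-Complex.I / 2) * (z (Sum.inl i) - (starRingEnd ℂ) (z (Sum.inr i))) with hw
  set y1 : Fin a ⊕ Fin a → ℂ := Sum.elim x (star x) with hy1
  set y2 : Fin a ⊕ Fin a → ℂ := Sum.elim w (star w) with hy2
  have hz : z = y1 + Complex.I • y2 := z_decomp z
  have ht : star y2 ⬝ᵥ (bm P *ᵥ y1) = star y1 ⬝ᵥ (bm P *ᵥ y2) := by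
    rw [← herm_dot hH y1 y2]
    -- `star y1 ⬝ᵥ bm P *ᵥ y2` is real:
    have hreal : star (star y1 ⬝ᵥ (bm P *ᵥ y2)) = star y1 ⬝ᵥ (bm P *ᵥ y2) := by
      rw [hy2, hy1, bm_mulVec_pair, star_sum_elim, Matrix.dotProduct_block]
      simp only [Sum.elim_comp_inl, Sum.elim_comp_inr]
      have h2 : star (star x) ⬝ᵥ star (P.apply w) = star (star x ⬝ᵥ P.apply w) := by
        rw [star_dot_gen, star_star]
      rw [h2, star_add, star_star, add_comm]
    rw [hreal]
  have hexp : star z ⬝ᵥ (bm P *ᵥ z)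
      = (star y1 ⬝ᵥ (bm P *ᵥ y1)) + (star y2 ⬝ᵥ (bm P *ᵥ y2))
        + Complex.I * (star y1 ⬝ᵥ (bm P *ᵥ y2))
        - Complex.I * (star y2 ⬝ᵥ (bm P *ᵥ y1)) := by
    rw [hz]
    simp only [star_add, star_smul, Matrix.mulVec_add, Matrix.mulVec_smul,
      add_dotProduct, dotProduct_add, smul_dotProduct,
      dotProduct_smul, smul_eq_mul, Complex.star_def, Complex.conj_I]
    linear_combination (-(star y2 ⬝ᵥ (bm P *ᵥ y2))) * Complex.I_sq
  rw [hexp, ht]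
  have hq1 := quad_pair P x
  have hq2 := quad_pair P w
  rw [← hy1] at hq1
  rw [← hy2] at hq2
  rw [hq1, hq2]
  push_cast
  ring

lemma posSemidef_bm_of {a : ℕ} {P : Bimatrix a a} (h : P.PosSemidef) :
    (bm P).PosSemidef := by
  have hH : (bm P).IsHermitian := (isHermitian_iff_bm P).mp h.1
  refine Matrix.PosSemidef.of_dotProduct_mulVec_nonneg hH (fun z => ?_)
  rw [bm_quad_eq P hH z, Complex.zero_le_real]
  have := h.2 (fun i => 2⁻¹ * (z (Sum.inl i) + (starRingEnd ℂ) (z (Sum.inr i))))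
  have := h.2 (fun i => (-Complex.I / 2) * (z (Sum.inl i) - (starRingEnd ℂ) (z (Sum.inr i))))
  linarith

lemma posDef_bm_of {a : ℕ} {P : Bimatrix a a} (h : P.PosDef) : (bm P).PosDef := by
  have hH : (bm P).IsHermitian := (isHermitian_iff_bm P).mp h.1
  refine Matrix.PosDef.of_dotProduct_mulVec_pos hH (fun z hz => ?_)
  rw [bm_quad_eq P hH z, Complex.zero_lt_real]
  set x : Fin a → ℂ := fun i => 2⁻¹ * (z (Sum.inl i) + (starRingEnd ℂ) (z (Sum.inr i))) with hx
  set w : Fin a → ℂ :=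
    fun i => (-Complex.I / 2) * (z (Sum.inl i) - (starRingEnd ℂ) (z (Sum.inr i))) with hw
  have hxw : x ≠ 0 ∨ w ≠ 0 := by
    by_contra hc
    push_neg at hc
    apply hz
    rw [z_decomp z, ← hx, ← hw, hc.1, hc.2]
    simp
  rcases hxw with hne | hne
  · have h1 := h.2.2 x hne
    have h2 := h.2.1 w
    linarith
  · have h1 := h.2.1 x
    have h2 := h.2.2 w hne
    linarith

lemma posSemidef_iff_bm {a : ℕ} (P : Bimatrix a a) :
    P.PosSemidef ↔ (bm P).PosSemidef := by
  refine ⟨posSemidef_bm_of, fun h => ?_⟩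
  exact ⟨(isHermitian_iff_bm P).mpr h.1, quadForm_nonneg_of_bm h.dotProduct_mulVec_nonneg⟩

lemma posDef_iff_bm {a : ℕ} (P : Bimatrix a a) :
    P.PosDef ↔ (bm P).PosDef := by
  refine ⟨posDef_bm_of, fun h => ?_⟩
  have hpsd : (bm P).PosSemidef := h.posSemidef
  exact ⟨(isHermitian_iff_bm P).mpr h.1, quadForm_nonneg_of_bm hpsd.dotProduct_mulVec_nonneg,
    fun x hx => quadForm_pos_of_bm (fun _ hz => h.dotProduct_mulVec_pos hz) hx⟩

end Aux4

section Aux5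
set_option linter.unusedSectionVars false

lemma bm_Smat {n m : ℕ} (B : Bimatrix n m) (R : Matrix (Fin m) (Fin m) ℂ)
    (P : Bimatrix n n) :
    bm (Smat B R P) = bm (⟨R, 0⟩ : Bimatrix m m) + (bm B)ᴴ * bm P * bm B := by
  rw [Smat, bm_add, bm_mul, bm_mul, bm_conjT, Matrix.mul_assoc]

lemma bm_posDef_of_posDef {a : ℕ} {Q : Matrix (Fin a) (Fin a) ℂ} (hQ : Q.PosDef) :
    (bm (⟨Q, 0⟩ : Bimatrix a a)).PosDef := by
  have h : bm (⟨Q, 0⟩ : Bimatrix a a) = Matrix.fromBlocks Q 0 0 Qᵀ := by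
    rw [show bm (⟨Q, 0⟩ : Bimatrix a a) = Matrix.fromBlocks Q (mconj 0) 0 (mconj Q) from rfl,
      mconj_zero, mconj_of_isHermitian hQ.1]
  rw [h]
  exact posDef_fromBlocks_diag hQ hQ.transpose

end Aux5

/-- If the system is stabilizable and `{P₁,P₂}` is the unique positive
definite solution of the bimatrix Riccati equation, then the iteration starting from
`{Q,0}` is well defined (each `{S₁(k),S₂(k)}` is positive definite, hence invertible)
and is monotone: `{Q,0} ≤ {P(k)} ≤ {P(k+1)} ≤ {P₁,P₂}` for all `k`. -/
theorem riccatiIter_monotone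
    (A : Bimatrix n n) (B : Bimatrix n m)
    (Q : Matrix (Fin n) (Fin n) ℂ) (R : Matrix (Fin m) (Fin m) ℂ)
    (hQ : Q.PosDef) (hR : R.PosDef)
    (hstab : Stabilizable A B)
    (P : Bimatrix n n) (hP : P.PosDef ∧ RiccatiEq A B Q R P)
    (huniq : ∀ P' : Bimatrix n n, P'.PosDef ∧ RiccatiEq A B Q R P' → P' = P) :
    ∀ k : ℕ,
      ((Smat B R (riccatiIter A B Q R k)).PosDef ∧
        (Smat B R (riccatiIter A B Q R k)).IsInv (Smat B R (riccatiIter A B Q R k)).inv) ∧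
      Bimatrix.le ⟨Q, 0⟩ (riccatiIter A B Q R k) ∧
      Bimatrix.le (riccatiIter A B Q R k) (riccatiIter A B Q R (k + 1)) ∧
      Bimatrix.le (riccatiIter A B Q R (k + 1)) P := by

  classical
  obtain ⟨hPpd, hPric⟩ := hP
  obtain ⟨T, hTinv, heq⟩ := hPric
  set A' := bm A with hA'
  set B' := bm B with hB'
  set Q' := bm (⟨Q, 0⟩ : Bimatrix n n) with hQ'def
  set R' := bm (⟨R, 0⟩ : Bimatrix m m) with hR'def
  set Mp := bm P with hMpdef
  have hQ' : Q'.PosDef := bm_posDef_of_posDef hQ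
  have hR' : R'.PosDef := bm_posDef_of_posDef hR
  have hMp : Mp.PosDef := posDef_bm_of hPpd
  have hSmatP : bm (Smat B R P) = R' + B'ᴴ * Mp * B' := bm_Smat B R P
  obtain ⟨hUS, hTbm⟩ := bm_of_isInv hTinv
  have hfix : Mp = fm A' B' Q' R' Mp := by
    have h := congrArg bm heq
    simp only [bm_neg, bm_sub, bm_mul, bm_conjT] at h
    rw [← hA', ← hB', ← hMpdef, ← hQ'def] at h
    rw [hTbm, hSmatP] at h
    simp only [Matrix.mul_assoc] at h
    rw [fm]
    simp only [Matrix.mul_assoc]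
    rw [← sub_eq_zero]
    rw [show Mp - (Q' + A'ᴴ * (Mp * A')
        - A'ᴴ * (Mp * (B' * ((R' + B'ᴴ * (Mp * B'))⁻¹ * (B'ᴴ * (Mp * A'))))))
      = -Q' - ((A'ᴴ * (Mp * A') - Mp)
        - A'ᴴ * (Mp * (B' * ((R' + B'ᴴ * (Mp * B'))⁻¹ * (B'ᴴ * (Mp * A')))))) from by abel, h]
    simp
  have hQP : (Mp - Q').PosSemidef := by
    have h := fm_ge A' B' Q' hR' hMp.posSemidef
    rwa [← hfix] at h
  set It : ℕ → Bimatrix n n := riccatiIter A B Q R with hIt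
  have hX0 : bm (It 0) = Q' := rfl
  have hstep : ∀ k, (bm (It k)).PosSemidef →
      (Smat B R (It k)).PosDef ∧ (Smat B R (It k)).IsInv (Smat B R (It k)).inv ∧
        bm (It (k + 1)) = fm A' B' Q' R' (bm (It k)) := by
    intro k hk
    have hbmS : bm (Smat B R (It k)) = R' + B'ᴴ * bm (It k) * B' := bm_Smat B R (It k)
    have hSpd : (R' + B'ᴴ * bm (It k) * B').PosDef := S_posdef hR' hk B'
    have hSpd' : (bm (Smat B R (It k))).PosDef := by rw [hbmS]; exact hSpd
    have hU : IsUnit (bm (Smat B R (It k))) := hSpd'.isUnit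
    refine ⟨(posDef_iff_bm _).mpr hSpd', isInv_of_isUnit _ hU, ?_⟩
    have hiter : It (k + 1) = ((Bimatrix.mk Q 0).add (A.conjT.mul ((It k).mul A))).sub
        (A.conjT.mul ((It k).mul (B.mul ((Smat B R (It k)).inv.mul
          (B.conjT.mul ((It k).mul A)))))) := rfl
    rw [hiter]
    simp only [bm_sub, bm_add, bm_mul, bm_conjT]
    rw [bm_inv_eq _ hU, hbmS, fm]
    rw [hA', hB', hQ'def, hR'def]
    simp only [Matrix.mul_assoc]
  have main : ∀ k, (bm (It k) - Q').PosSemidef ∧ (Mp - bm (It k)).PosSemidef ∧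
      (bm (It (k + 1)) - bm (It k)).PosSemidef := by
    intro k
    induction k with
    | zero =>
      have hQpsd : (bm (It 0)).PosSemidef := by rw [hX0]; exact hQ'.posSemidef
      obtain ⟨-, -, hstep0⟩ := hstep 0 hQpsd
      refine ⟨by rw [hX0]; simpa using Matrix.PosSemidef.zero,
        by rw [hX0]; exact hQP, ?_⟩
      rw [hstep0, hX0]
      exact fm_ge A' B' Q' hR' hQ'.posSemidef
    | succ k ih =>
      obtain ⟨ih1, ih2, ih3⟩ := ih
      have hXk : (bm (It k)).PosSemidef := by
        have h := hQ'.posSemidef.add ih1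
        rwa [show Q' + (bm (It k) - Q') = bm (It k) from by abel] at h
      obtain ⟨-, -, hsk⟩ := hstep k hXk
      have h1 : (bm (It (k + 1)) - Q').PosSemidef := by
        rw [hsk]; exact fm_ge A' B' Q' hR' hXk
      have hXk1 : (bm (It (k + 1))).PosSemidef := by
        have h := hQ'.posSemidef.add h1
        rwa [show Q' + (bm (It (k + 1)) - Q') = bm (It (k + 1)) from by abel] at h
      obtain ⟨-, -, hsk1⟩ := hstep (k + 1) hXk1
      refine ⟨h1, ?_, ?_⟩
      · have h := fm_mono A' B' Q' hR' hXk hMp.posSemidef ih2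
        rwa [← hfix, ← hsk] at h
      · have h := fm_mono A' B' Q' hR' hXk hXk1 ih3
        rwa [← hsk, ← hsk1] at h
  intro k
  obtain ⟨m1, m2, m3⟩ := main k
  have hXk : (bm (It k)).PosSemidef := by
    have h := hQ'.posSemidef.add m1
    rwa [show Q' + (bm (It k) - Q') = bm (It k) from by abel] at h
  obtain ⟨s1, s2, -⟩ := hstep k hXk
  refine ⟨⟨s1, s2⟩, ?_, ?_, ?_⟩
  · show Bimatrix.PosSemidef ((It k).sub ⟨Q, 0⟩)
    rw [posSemidef_iff_bm, bm_sub]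
    exact m1
  · show Bimatrix.PosSemidef ((It (k + 1)).sub (It k))
    rw [posSemidef_iff_bm, bm_sub]
    exact m3
  · show Bimatrix.PosSemidef (P.sub (It (k + 1)))
    rw [posSemidef_iff_bm, bm_sub]
    exact (main (k + 1)).2.1
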